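/- Let A, E ∈ ℝ^{n×n} be symmetric, let Z, δZ ∈ ℝ^{n×n} be such that P = Z + δZ is orthogonal, and let D ∈ ℝ^{n×n} be diagonal with A + E = P D Pᵀ. Then ‖Zᵀ A Z − D‖_F ≤ ‖A‖_F (2‖Z‖ + ‖δZ‖) ‖δZ‖ + ‖E‖_F. -/

import Mathlib

open Matrix

noncomputable def specNorm {m n : ℕ} (A : Matrix (Fin m) (Fin n) ℝ) : ℝ :=
  ‖LinearMap.toContinuousLinearMap (Matrix.toEuclideanLin A)‖

noncomputable def frobNorm {m n : ℕ} (A : Matrix (Fin m) (Fin n) ℝ) : ℝ :=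
  Real.sqrt (∑ p, ∑ q, (A p q) ^ 2)

def offDiag {n : ℕ} (A : Matrix (Fin n) (Fin n) ℝ) : Matrix (Fin n) (Fin n) ℝ :=
  fun p q => if p = q then 0 else A p q

def jacobiRot {n : ℕ} (i j : Fin n) (c s : ℝ) : Matrix (Fin n) (Fin n) ℝ :=
  fun p q =>
    if p = i ∧ q = i then c
    else if p = j ∧ q = j then c
    else if p = i ∧ q = j then s
    else if p = j ∧ q = i then -s
    else if p = q then 1 else 0

open Classical in
noncomputable def eigValsDesc {n : ℕ} (A : Matrix (Fin n) (Fin n) ℝ) : Fin n → ℝ :=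
  if hA : A.IsHermitian then
    fun k => (hA.eigenvalues ∘ Tuple.sort hA.eigenvalues) k.rev
  else 0

noncomputable def singValsDesc {m n : ℕ} (A : Matrix (Fin m) (Fin n) ℝ) : Fin n → ℝ :=
  fun k => Real.sqrt (eigValsDesc (Aᵀ * A) k)
namespace ZAZaux

lemma frob_nonneg {m n : ℕ} (A : Matrix (Fin m) (Fin n) ℝ) : 0 ≤ frobNorm A :=
  Real.sqrt_nonneg _

lemma spec_nonneg {m n : ℕ} (A : Matrix (Fin m) (Fin n) ℝ) : 0 ≤ specNorm A :=
  norm_nonneg _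

lemma frob_eq_norm {m n : ℕ} (A : Matrix (Fin m) (Fin n) ℝ) :
    frobNorm A = ‖((WithLp.equiv 2 (Fin m × Fin n → ℝ)).symm (fun p => A p.1 p.2) :
      EuclideanSpace ℝ (Fin m × Fin n))‖ := by
  rw [EuclideanSpace.norm_eq, frobNorm]
  congr 1
  rw [Fintype.sum_prod_type]
  simp [Real.norm_eq_abs, sq_abs]

lemma frob_add {m n : ℕ} (X Y : Matrix (Fin m) (Fin n) ℝ) :
    frobNorm (X + Y) ≤ frobNorm X + frobNorm Y := by
  rw [frob_eq_norm, frob_eq_norm X, frob_eq_norm Y]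
  refine le_trans (le_of_eq ?_) (norm_add_le
    ((WithLp.equiv 2 (Fin m × Fin n → ℝ)).symm (fun p => X p.1 p.2) : EuclideanSpace ℝ (Fin m × Fin n))
    ((WithLp.equiv 2 (Fin m × Fin n → ℝ)).symm (fun p => Y p.1 p.2)))
  congr 1

lemma frob_neg {m n : ℕ} (X : Matrix (Fin m) (Fin n) ℝ) : frobNorm (-X) = frobNorm X := by
  simp [frobNorm, Matrix.neg_apply]

lemma frob_transpose {m n : ℕ} (A : Matrix (Fin m) (Fin n) ℝ) : frobNorm Aᵀ = frobNorm A := by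
  rw [frobNorm, frobNorm, Finset.sum_comm]
  simp [Matrix.transpose_apply]

lemma norm_symm_sq {m : ℕ} (x : Fin m → ℝ) :
    ‖((WithLp.equiv 2 (Fin m → ℝ)).symm x : EuclideanSpace ℝ (Fin m))‖ ^ 2 = ∑ p, x p ^ 2 := by
  rw [EuclideanSpace.norm_eq, Real.sq_sqrt (by positivity)]
  simp [Real.norm_eq_abs, sq_abs]

lemma mulVec_sq_le {m n : ℕ} (B : Matrix (Fin m) (Fin n) ℝ) (x : Fin n → ℝ) :
    ∑ p, (B *ᵥ x) p ^ 2 ≤ specNorm B ^ 2 * ∑ q, x q ^ 2 := by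
  have h := (LinearMap.toContinuousLinearMap (Matrix.toEuclideanLin B)).le_opNorm
    ((WithLp.equiv 2 (Fin n → ℝ)).symm x)
  rw [LinearMap.coe_toContinuousLinearMap'] at h
  erw [Matrix.toEuclideanLin_apply_piLp_toLp] at h
  have h2 : ‖((WithLp.equiv 2 (Fin m → ℝ)).symm (B *ᵥ x) : EuclideanSpace ℝ (Fin m))‖ ^ 2 ≤
      (specNorm B * ‖((WithLp.equiv 2 (Fin n → ℝ)).symm x : EuclideanSpace ℝ (Fin n))‖) ^ 2 := by
    apply pow_le_pow_left₀ (norm_nonneg _) h _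
  rw [norm_symm_sq, mul_pow, norm_symm_sq] at h2
  exact h2

lemma frob_mul_le_left {l m n : ℕ} (B : Matrix (Fin l) (Fin m) ℝ) (C : Matrix (Fin m) (Fin n) ℝ) :
    frobNorm (B * C) ≤ specNorm B * frobNorm C := by
  have hsq : frobNorm (B * C) ^ 2 ≤ (specNorm B * frobNorm C) ^ 2 := by
    rw [mul_pow, frobNorm, frobNorm, Real.sq_sqrt (by positivity : (0:ℝ) ≤ ∑ p, ∑ q, ((B*C) p q)^2),
      Real.sq_sqrt (by positivity : (0:ℝ) ≤ ∑ p, ∑ q, (C p q)^2)]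
    calc ∑ p, ∑ q, ((B * C) p q) ^ 2
        = ∑ q, ∑ p, ((B *ᵥ fun i => C i q) p) ^ 2 := by
          rw [Finset.sum_comm]
          simp [Matrix.mul_apply, Matrix.mulVec, dotProduct]
      _ ≤ ∑ q : Fin n, specNorm B ^ 2 * ∑ i, (C i q) ^ 2 :=
          Finset.sum_le_sum fun q _ => mulVec_sq_le B _
      _ = specNorm B ^ 2 * ∑ p, ∑ q, (C p q) ^ 2 := by
          rw [← Finset.mul_sum, Finset.sum_comm]
  have := Real.sqrt_le_sqrt hsq
  rwa [Real.sqrt_sq (frob_nonneg _),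
    Real.sqrt_sq (mul_nonneg (spec_nonneg _) (frob_nonneg _))] at this

open scoped Matrix.Norms.L2Operator in
lemma spec_transpose {m n : ℕ} (A : Matrix (Fin m) (Fin n) ℝ) : specNorm Aᵀ = specNorm A := by
  have h1 : specNorm A = ‖A‖ := rfl
  have h2 : specNorm Aᵀ = ‖Aᵀ‖ := rfl
  have h3 : Aᴴ = Aᵀ := by ext i j; simp [Matrix.conjTranspose_apply]
  rw [h1, h2, ← h3, Matrix.l2_opNorm_conjTranspose]

lemma frob_mul_le_right {l m n : ℕ} (C : Matrix (Fin l) (Fin m) ℝ) (B : Matrix (Fin m) (Fin n) ℝ) :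
    frobNorm (C * B) ≤ frobNorm C * specNorm B := by
  rw [← frob_transpose (C * B), Matrix.transpose_mul]
  calc frobNorm (Bᵀ * Cᵀ) ≤ specNorm Bᵀ * frobNorm Cᵀ := frob_mul_le_left _ _
    _ = frobNorm C * specNorm B := by rw [spec_transpose, frob_transpose]; ring

lemma frob_mul3 {n : ℕ} (X A Y : Matrix (Fin n) (Fin n) ℝ) :
    frobNorm (X * A * Y) ≤ specNorm X * frobNorm A * specNorm Y :=
  calc frobNorm (X * A * Y) ≤ frobNorm (X * A) * specNorm Y := frob_mul_le_right _ _
    _ ≤ specNorm X * frobNorm A * specNorm Y :=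
      mul_le_mul_of_nonneg_right (frob_mul_le_left _ _) (spec_nonneg _)

lemma mulVec_orth {n : ℕ} (Q : Matrix (Fin n) (Fin n) ℝ) (hQ : Qᵀ * Q = 1) (x : Fin n → ℝ) :
    ∑ p, (Q *ᵥ x) p ^ 2 = ∑ p, x p ^ 2 := by
  have h : (Q *ᵥ x) ⬝ᵥ (Q *ᵥ x) = x ⬝ᵥ x := by
    rw [Matrix.dotProduct_mulVec, ← Matrix.vecMul_transpose, Matrix.vecMul_vecMul, hQ,
      Matrix.vecMul_one]
  simpa [dotProduct, sq] using h

lemma frob_orth_left {n m : ℕ} (Q : Matrix (Fin n) (Fin n) ℝ) (hQ : Qᵀ * Q = 1)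
    (M : Matrix (Fin n) (Fin m) ℝ) : frobNorm (Q * M) = frobNorm M := by
  rw [frobNorm, frobNorm, Finset.sum_comm,
    Finset.sum_comm (f := fun p q => (M p q) ^ 2)]
  congr 1
  refine Finset.sum_congr rfl fun q _ => ?_
  have := mulVec_orth Q hQ (fun i => M i q)
  simpa [Matrix.mul_apply, Matrix.mulVec, dotProduct] using this

lemma frob_orth_right {n m : ℕ} (Q : Matrix (Fin n) (Fin n) ℝ) (hQ : Q * Qᵀ = 1)
    (M : Matrix (Fin m) (Fin n) ℝ) : frobNorm (M * Q) = frobNorm M := by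
  rw [← frob_transpose (M * Q), Matrix.transpose_mul,
    frob_orth_left Qᵀ (by rwa [Matrix.transpose_transpose]), frob_transpose]

end ZAZaux

open ZAZaux

/-- Bound on `‖Zᵀ A Z - D‖_F` for a nearly exact eigendecomposition. -/
theorem ZAZ_minus_D_bound {n : ℕ} (A E Z δZ D : Matrix (Fin n) (Fin n) ℝ)
    (hA : Aᵀ = A) (hE : Eᵀ = E)
    (horth : (Z + δZ)ᵀ * (Z + δZ) = 1)
    (hD : D.IsDiag)
    (hfac : A + E = (Z + δZ) * D * (Z + δZ)ᵀ) :
    frobNorm (Zᵀ * A * Z - D) ≤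
      frobNorm A * (2 * specNorm Z + specNorm δZ) * specNorm δZ + frobNorm E := by
  set P := Z + δZ with hP
  have hPPt : P * Pᵀ = 1 := mul_eq_one_comm.mp horth
  have hDeq : D = Pᵀ * A * P + Pᵀ * E * P := by
    have h1 : Pᵀ * (A + E) * P = D := by
      rw [hfac]
      calc Pᵀ * (P * D * Pᵀ) * P = (Pᵀ * P) * D * (Pᵀ * P) := by noncomm_ring
        _ = D := by rw [horth, one_mul, mul_one]
    rw [← h1]; noncomm_ring
  have key : Zᵀ * A * Z - D =
      (-(Zᵀ * A * δZ)) + (-(δZᵀ * A * Z)) + (-(δZᵀ * A * δZ)) + (-(Pᵀ * E * P)) := by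
    rw [hDeq, hP, Matrix.transpose_add]
    noncomm_ring
  rw [key]
  have t1 : frobNorm ((-(Zᵀ * A * δZ)) + (-(δZᵀ * A * Z)) + (-(δZᵀ * A * δZ)) + (-(Pᵀ * E * P)))
      ≤ frobNorm (Zᵀ * A * δZ) + frobNorm (δZᵀ * A * Z) + frobNorm (δZᵀ * A * δZ)
        + frobNorm (Pᵀ * E * P) := by
    calc frobNorm _ ≤ frobNorm ((-(Zᵀ * A * δZ)) + (-(δZᵀ * A * Z)) + (-(δZᵀ * A * δZ)))
          + frobNorm (-(Pᵀ * E * P)) := frob_add _ _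
      _ ≤ frobNorm ((-(Zᵀ * A * δZ)) + (-(δZᵀ * A * Z))) + frobNorm (-(δZᵀ * A * δZ))
          + frobNorm (-(Pᵀ * E * P)) := by
            have := frob_add ((-(Zᵀ * A * δZ)) + (-(δZᵀ * A * Z))) (-(δZᵀ * A * δZ))
            linarith
      _ ≤ frobNorm (-(Zᵀ * A * δZ)) + frobNorm (-(δZᵀ * A * Z)) + frobNorm (-(δZᵀ * A * δZ))
          + frobNorm (-(Pᵀ * E * P)) := by
            have := frob_add (-(Zᵀ * A * δZ)) (-(δZᵀ * A * Z))
            linarith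
      _ = _ := by rw [frob_neg, frob_neg, frob_neg, frob_neg]
  have b1 : frobNorm (Zᵀ * A * δZ) ≤ specNorm Z * frobNorm A * specNorm δZ := by
    have := frob_mul3 Zᵀ A δZ
    rwa [spec_transpose] at this
  have b2 : frobNorm (δZᵀ * A * Z) ≤ specNorm δZ * frobNorm A * specNorm Z := by
    have := frob_mul3 δZᵀ A Z
    rwa [spec_transpose] at this
  have b3 : frobNorm (δZᵀ * A * δZ) ≤ specNorm δZ * frobNorm A * specNorm δZ := by
    have := frob_mul3 δZᵀ A δZ
    rwa [spec_transpose] at this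
  have b4 : frobNorm (Pᵀ * E * P) = frobNorm E := by
    rw [mul_assoc, frob_orth_left Pᵀ (by rwa [Matrix.transpose_transpose]),
      frob_orth_right P hPPt]
  have hring : frobNorm A * (2 * specNorm Z + specNorm δZ) * specNorm δZ =
      specNorm Z * frobNorm A * specNorm δZ + specNorm δZ * frobNorm A * specNorm Z +
      specNorm δZ * frobNorm A * specNorm δZ := by ring
  linarith
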